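/- Let α be a stable exponent sequence and β an exponent sequence such that Λ_1(β) is nuclear (i.e., for every positive integer k there exists an integer l > k with ∑_{n=0}^∞ e^{β_n(1/l − 1/k)} < ∞) and such that n α_n ≤ β_n for all sufficiently large n. Let θ : ℕ → ℂ satisfy |θ_n| ≤ C₀ e^{m₀ α_n} for all n, for some m₀ ∈ ℕ and C₀ > 0 (θ belongs to the dual of Λ_∞(α)). Then there exists d ∈ ℕ such that for every positive integer k there is C > 0 with ∑_{j=0}^∞ |θ_{j+n}| · e^{-β_j/k} ≤ C · e^{d α_n} for all n ∈ ℕ (i.e., the Hankel operator H_θ : Λ_∞(α) → Λ_1(β) is continuous and satisfies the compactness condition, the index d being independent of k). -/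
import Mathlib

set_option maxHeartbeats 1000000


/-- Let `α` be a stable exponent sequence and `β` an exponent sequence
with `Λ_1(β)` nuclear and `n α_n ≤ β_n` for all sufficiently large `n`. Then for every
`θ` in the dual of `Λ_∞(α)`, the Hankel operator `H_θ : Λ_∞(α) → Λ_1(β)` is continuous
and satisfies the compactness condition (the index `d` is independent of `k`). -/
theorem hankel_infinite_to_nuclear_finite_compact
    (α β : ℕ → ℝ) (θ : ℕ → ℂ)
    (hα_nonneg : ∀ n, 0 ≤ α n) (hα_mono : Monotone α)
    (hα_tendsto : Filter.Tendsto α Filter.atTop Filter.atTop)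
    (hα_stable : ∃ M : ℝ, 0 < M ∧ ∀ n : ℕ, α (2 * n) ≤ M * α n)
    (hβ_nonneg : ∀ n, 0 ≤ β n) (hβ_mono : Monotone β)
    (hβ_tendsto : Filter.Tendsto β Filter.atTop Filter.atTop)
    (hβ_nuclear : ∀ k : ℕ, 0 < k → ∃ l : ℕ, k < l ∧
      Summable fun n : ℕ => Real.exp (β n * (1 / (l : ℝ) - 1 / (k : ℝ))))
    (hαβ : ∃ N : ℕ, ∀ n : ℕ, N ≤ n → (n : ℝ) * α n ≤ β n)
    (hθ : ∃ m₀ : ℕ, ∃ C₀ : ℝ, 0 < C₀ ∧ ∀ n : ℕ, ‖θ n‖ ≤ C₀ * Real.exp ((m₀ : ℝ) * α n)) :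
    ∃ d : ℕ, ∀ k : ℕ, 0 < k → ∃ C : ℝ, 0 < C ∧
      ∀ n : ℕ, (∑' j : ℕ, ‖θ (j + n)‖ * Real.exp (-β j / (k : ℝ))) ≤
        C * Real.exp ((d : ℝ) * α n) := by
  obtain ⟨M, hM, hstab⟩ := hα_stable
  obtain ⟨N, hN⟩ := hαβ
  obtain ⟨m₀, C₀, hC₀, hθb⟩ := hθ
  set K : ℝ := (m₀ : ℝ) * M with hKdef
  have hK0 : 0 ≤ K := by positivity
  -- pointwise bound on θ (j + n)
  have key : ∀ j n : ℕ, ‖θ (j + n)‖ ≤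
      C₀ * Real.exp (K * α j) * Real.exp (K * α n) := by
    intro j n
    have hmax : α (max j n) ≤ α j + α n := by
      rcases le_total j n with h | h
      · rw [max_eq_right h]; linarith [hα_nonneg j]
      · rw [max_eq_left h]; linarith [hα_nonneg n]
    have h1 : α (j + n) ≤ M * (α j + α n) := by
      calc α (j + n) ≤ α (2 * max j n) := hα_mono (by omega)
        _ ≤ M * α (max j n) := hstab _
        _ ≤ M * (α j + α n) := by
            exact mul_le_mul_of_nonneg_left hmax hM.le
    have h2 : (m₀ : ℝ) * α (j + n) ≤ K * α j + K * α n := by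
      have := mul_le_mul_of_nonneg_left h1 (by positivity : (0:ℝ) ≤ (m₀:ℝ))
      rw [hKdef]; ring_nf; nlinarith
    calc ‖θ (j + n)‖ ≤ C₀ * Real.exp ((m₀ : ℝ) * α (j + n)) := hθb _
      _ ≤ C₀ * Real.exp (K * α j + K * α n) := by
          exact mul_le_mul_of_nonneg_left (Real.exp_le_exp.2 h2) hC₀.le
      _ = C₀ * Real.exp (K * α j) * Real.exp (K * α n) := by
          rw [Real.exp_add]; ring
  refine ⟨⌈K⌉₊, ?_⟩
  intro k hk
  have hkR : (0 : ℝ) < (k : ℝ) := by exact_mod_cast hk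
  -- summability of the majorant
  have hsum : Summable (fun j : ℕ => Real.exp (K * α j) * Real.exp (-β j / (k : ℝ))) := by
    obtain ⟨l, hl, hsl⟩ := hβ_nuclear (2 * k) (by positivity)
    have hlR : (0 : ℝ) < (l : ℝ) := by exact_mod_cast (by omega : 0 < l)
    set j₀ : ℕ := max N (⌈2 * (k : ℝ) * K⌉₊ + 1) with hj₀
    rw [← summable_nat_add_iff j₀]
    have hsl' : Summable (fun j : ℕ =>
        Real.exp (β (j + j₀) * (1 / (l : ℝ) - 1 / ((2 * k : ℕ) : ℝ)))) :=
      (summable_nat_add_iff j₀).2 hsl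
    refine Summable.of_nonneg_of_le (fun j => by positivity) (fun j => ?_) hsl'
    set m : ℕ := j + j₀ with hm
    have hmN : N ≤ m := by omega
    have hmK : 2 * (k : ℝ) * K ≤ (m : ℝ) := by
      have h00 : ⌈2 * (k : ℝ) * K⌉₊ ≤ m := by
        have h01 := le_max_right N (⌈2 * (k : ℝ) * K⌉₊ + 1)
        omega
      have h02 : (⌈2 * (k : ℝ) * K⌉₊ : ℝ) ≤ (m : ℝ) := by exact_mod_cast h00
      linarith [Nat.le_ceil (2 * (k : ℝ) * K)]
    have hαβm : (m : ℝ) * α m ≤ β m := hN m hmN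
    have hKαm : K * α m ≤ β m / (2 * (k : ℝ)) := by
      rw [le_div_iff₀ (by positivity)]
      have h1 : K * α m * (2 * (k : ℝ)) = (2 * (k : ℝ) * K) * α m := by ring
      rw [h1]
      calc (2 * (k : ℝ) * K) * α m ≤ (m : ℝ) * α m :=
            mul_le_mul_of_nonneg_right hmK (hα_nonneg m)
        _ ≤ β m := hαβm
    rw [← Real.exp_add]
    apply Real.exp_le_exp.2
    have hcast : ((2 * k : ℕ) : ℝ) = 2 * (k : ℝ) := by push_cast; ring
    rw [hcast]
    have hβm : 0 ≤ β m := hβ_nonneg m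
    have hnd : -β m / (k : ℝ) = -(β m / (k : ℝ)) := neg_div _ _
    have : K * α m + -β m / (k : ℝ) ≤ β m / (2 * (k:ℝ)) - β m / (k:ℝ) := by
      rw [hnd]; linarith
    refine this.trans ?_
    rw [mul_sub]
    have h1 : β m / (2 * (k:ℝ)) - β m / (k:ℝ) = -(β m * (1 / (2 * (k:ℝ)))) := by
      field_simp; ring
    have h2 : 0 ≤ β m * (1 / (l:ℝ)) := by positivity
    nlinarith [h2]
  set S : ℝ := ∑' j : ℕ, Real.exp (K * α j) * Real.exp (-β j / (k : ℝ)) with hS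
  have hSpos : 0 < S := Summable.tsum_pos hsum (fun j => by positivity) 0 (by positivity)
  refine ⟨C₀ * S, by positivity, ?_⟩
  intro n
  have hsum2 : Summable (fun j : ℕ =>
      (C₀ * Real.exp (K * α n)) * (Real.exp (K * α j) * Real.exp (-β j / (k : ℝ)))) :=
    hsum.mul_left _
  have hle : ∀ j : ℕ, ‖θ (j + n)‖ * Real.exp (-β j / (k : ℝ)) ≤
      (C₀ * Real.exp (K * α n)) * (Real.exp (K * α j) * Real.exp (-β j / (k : ℝ))) := by
    intro j
    have := mul_le_mul_of_nonneg_right (key j n)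
      (Real.exp_nonneg (-β j / (k : ℝ)))
    calc ‖θ (j + n)‖ * Real.exp (-β j / (k : ℝ))
        ≤ C₀ * Real.exp (K * α j) * Real.exp (K * α n) * Real.exp (-β j / (k : ℝ)) := this
      _ = (C₀ * Real.exp (K * α n)) * (Real.exp (K * α j) * Real.exp (-β j / (k : ℝ))) := by
          ring
  have hsum1 : Summable (fun j : ℕ => ‖θ (j + n)‖ * Real.exp (-β j / (k : ℝ))) :=
    Summable.of_nonneg_of_le (fun j => by positivity) hle hsum2
  calc (∑' j : ℕ, ‖θ (j + n)‖ * Real.exp (-β j / (k : ℝ)))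
      ≤ ∑' j : ℕ, (C₀ * Real.exp (K * α n)) *
          (Real.exp (K * α j) * Real.exp (-β j / (k : ℝ))) :=
        Summable.tsum_le_tsum hle hsum1 hsum2
    _ = (C₀ * Real.exp (K * α n)) * S := by rw [tsum_mul_left]
    _ ≤ (C₀ * S) * Real.exp ((⌈K⌉₊ : ℝ) * α n) := by
        have hKd : K * α n ≤ (⌈K⌉₊ : ℝ) * α n :=
          mul_le_mul_of_nonneg_right (Nat.le_ceil K) (hα_nonneg n)
        have := mul_le_mul_of_nonneg_left (Real.exp_le_exp.2 hKd) (by positivity : 0 ≤ C₀ * S)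
        nlinarith [Real.exp_pos (K * α n), Real.exp_pos ((⌈K⌉₊:ℝ) * α n)]
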